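/- Let p ≥ 3 be a prime number. Let c be the permutation of ZMod p given by c(i) = i + 1, and let the cyclic group generated by c act on the group of all permutations of ZMod p by conjugation, σ ↦ c^k ∘ σ ∘ c^{-k}. Then the number of orbits of this action equals (p - 1)! + p - 1. -/

import Mathlib

/-- Sign function: `sg u = 1` if `u ≥ 0`, else `-1`. -/
def sg (u : ℤ) : ℤ := if 0 ≤ u then 1 else -1

/-- Hidden-layer map of the PBNN with weights `w = (w_a, w_b, w_c)`:
`h_w(x)_i = sg (w_a * x_{i-1} + w_b * x_i + w_c * x_{i+1})`. -/
def hmap (N : ℕ) (w : ℤ × ℤ × ℤ) (x : ZMod N → ℤ) : ZMod N → ℤ :=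
  fun i => sg (w.1 * x (i - 1) + w.2.1 * x i + w.2.2 * x (i + 1))

/-- PBNN map `f_{σ,w}(x)_i = h_w(x)_{σ(i)}`. -/
def pbnn (N : ℕ) (w : ℤ × ℤ × ℤ) (σ : Equiv.Perm (ZMod N)) (x : ZMod N → ℤ) :
    ZMod N → ℤ :=
  fun i => hmap N w x (σ i)

/-- `x` is a binary state vector, i.e. all entries lie in `B = {-1, 1}`. -/
def isB {N : ℕ} (x : ZMod N → ℤ) : Prop := ∀ i, x i = -1 ∨ x i = 1

/-- `z` has minimal period `p` under `f`. -/
def minPeriod {α : Type} (f : α → α) (z : α) (p : ℕ) : Prop :=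
  0 < p ∧ f^[p] z = z ∧ ∀ q : ℕ, 0 < q → f^[q] z = z → p ≤ q

/-- The all-`(-1)` endpoint `x_-`. -/
def xminus (N : ℕ) : ZMod N → ℤ := fun _ => -1

/-- The all-`(+1)` endpoint `x_+`. -/
def xplus (N : ℕ) : ZMod N → ℤ := fun _ => 1

/-- `f_{σ,w}` has a globally stable binary periodic orbit (GBPO) of period `p`:
there is a binary point `z` (other than the two endpoints) of minimal period `p`
such that every binary point other than the two endpoints eventually lands on
the orbit `{z, f z, ..., f^{p-1} z}`. -/
def hasGBPO (N : ℕ) (w : ℤ × ℤ × ℤ) (σ : Equiv.Perm (ZMod N)) (p : ℕ) : Prop :=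
  ∃ z : ZMod N → ℤ, isB z ∧ z ≠ xminus N ∧ z ≠ xplus N ∧
    minPeriod (pbnn N w σ) z p ∧
    ∀ x : ZMod N → ℤ, isB x → x ≠ xminus N → x ≠ xplus N →
      ∃ k : ℕ, ∃ j < p, (pbnn N w σ)^[k] x = (pbnn N w σ)^[j] z

/-- The cyclic shift `c : i ↦ i + 1` on `ZMod N`. -/
def cShift (N : ℕ) : Equiv.Perm (ZMod N) := Equiv.addRight 1

/-- Equivalence of permutation IDs under the conjugation action of the cyclic
group generated by `c`: `σ ~ τ` iff `τ = c^k ∘ σ ∘ c^{-k}` for some `k : ℤ`. -/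
def shiftSetoid (N : ℕ) : Setoid (Equiv.Perm (ZMod N)) where
  r σ τ := ∃ k : ℤ, cShift N ^ k * σ * (cShift N ^ k)⁻¹ = τ
  iseqv := by
    refine ⟨fun σ => ⟨0, by simp⟩, ?_, ?_⟩
    · rintro σ τ ⟨k, rfl⟩; exact ⟨-k, by group⟩
    · rintro σ τ ρ ⟨k, rfl⟩ ⟨l, rfl⟩; exact ⟨l + k, by group⟩

section Aux

variable (p : ℕ) [Fact p.Prime]

lemma cShift_pow (n : ℕ) : cShift p ^ n = Equiv.addRight (n : ZMod p) := by
  induction n with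
  | zero => ext x; simp
  | succ n ih =>
    rw [pow_succ, ih]; ext x
    simp only [Equiv.Perm.mul_apply, cShift, Equiv.coe_addRight]; push_cast; ring

lemma cShift_pow_eq_one_iff (n : ℕ) : cShift p ^ n = 1 ↔ (p : ℕ) ∣ n := by
  rw [cShift_pow]
  constructor
  · intro h
    have : (0 : ZMod p) + (n : ZMod p) = 0 := by
      have := congrArg (fun e => e.toFun (0 : ZMod p)) h
      simpa using this
    have hn : (n : ZMod p) = 0 := by simpa using this
    exact (ZMod.natCast_eq_zero_iff n p).mp hn
  · intro h
    have : (n : ZMod p) = 0 := (ZMod.natCast_eq_zero_iff n p).mpr h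
    rw [this]
    ext x; simp

lemma orderOf_cShift : orderOf (cShift p) = p := by
  have hp := (Fact.out : p.Prime)
  refine orderOf_eq_prime ((cShift_pow_eq_one_iff p p).mpr dvd_rfl) ?_
  intro h
  have := congrArg (fun e => e.toFun (0 : ZMod p)) h
  simp [cShift] at this

/-- Commuting with the shift forces being a shift. -/
lemma eq_addRight_of_commute {σ : Equiv.Perm (ZMod p)}
    (h : Commute (cShift p) σ) : σ = Equiv.addRight (σ 0) := by
  have key : ∀ x : ZMod p, σ (x + 1) = σ x + 1 := by
    intro x
    have := congrArg (fun e : Equiv.Perm (ZMod p) => e x) h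
    simpa [Equiv.Perm.mul_apply, cShift] using this.symm
  have claim : ∀ n : ℕ, σ (n : ZMod p) = σ 0 + n := by
    intro n
    induction n with
    | zero => simp
    | succ n ih => push_cast; rw [key, ih]; ring
  ext x
  obtain ⟨n, rfl⟩ := ZMod.natCast_rightInverse.surjective x
  simp [claim n, add_comm]

/-- The centralizer of the shift is in bijection with `ZMod p`. -/
noncomputable def centralizerEquiv :
    {σ : Equiv.Perm (ZMod p) // Commute (cShift p) σ} ≃ ZMod p where
  toFun σ := σ.1 0
  invFun k := ⟨Equiv.addRight k, by
    ext x; simp [Equiv.Perm.mul_apply, cShift]; ring⟩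
  left_inv σ := Subtype.ext (eq_addRight_of_commute p σ.2).symm
  right_inv k := by simp
end Aux

theorem stmt0 (p : ℕ) (hp : p.Prime) (h3 : 3 ≤ p) :
    Nat.card (Quotient (shiftSetoid p)) = (p - 1).factorial + p - 1 := by
  classical
  haveI : Fact p.Prime := ⟨hp⟩
  set G := Equiv.Perm (ZMod p) with hG
  letI : Fintype (ConjAct G) := inferInstance
  set cc : ConjAct G := ConjAct.toConjAct (cShift p) with hcc
  set H : Subgroup (ConjAct G) := Subgroup.zpowers cc with hH
  letI : Fintype H := Fintype.ofFinite H
  letI : ∀ a : H, Fintype (MulAction.fixedBy G a) := fun a => Fintype.ofFinite _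
  letI : Fintype (MulAction.orbitRel.Quotient H G) :=
    Fintype.ofFinite _
  -- the smul of `H` on `G` is conjugation
  have hsm : ∀ (a : H) (σ : G),
      a • σ = ConjAct.ofConjAct (a : ConjAct G) * σ * (ConjAct.ofConjAct (a : ConjAct G))⁻¹ :=
    fun a σ => rfl
  -- the two equivalence relations coincide
  have hrel : ∀ σ τ : G, (shiftSetoid p).r σ τ ↔ (MulAction.orbitRel H G).r σ τ := by
    intro σ τ
    constructor
    · rintro ⟨k, rfl⟩
      refine ⟨⟨cc ^ (-k), Subgroup.mem_zpowers_iff.mpr ⟨-k, rfl⟩⟩, ?_⟩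
      simp only [hsm]
      simp only [hcc, ← map_zpow, ConjAct.ofConjAct_toConjAct]
      group
    · rintro ⟨⟨a, ha⟩, rfl⟩
      obtain ⟨k, rfl⟩ := Subgroup.mem_zpowers_iff.mp ha
      refine ⟨-k, ?_⟩
      simp only [hsm]
      simp only [hcc, ← map_zpow, ConjAct.ofConjAct_toConjAct]
      group
  have hquot : Nat.card (Quotient (shiftSetoid p)) =
      Nat.card (MulAction.orbitRel.Quotient H G) :=
    Nat.card_congr (Quotient.congrRight hrel)
  -- cardinality of H
  have hcardH : Fintype.card H = p := by
    rw [← Nat.card_eq_fintype_card, hH, Nat.card_zpowers, hcc,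
      MulEquiv.orderOf_eq, orderOf_cShift]
  -- fixed points of nontrivial elements
  have hfixne : ∀ a : H, a ≠ 1 → Nat.card (MulAction.fixedBy G a) = p := by
    intro a hne
    obtain ⟨k, hk⟩ := Subgroup.mem_zpowers_iff.mp a.2
    set g : G := ConjAct.ofConjAct (a : ConjAct G) with hg
    have hgz : g ∈ Subgroup.zpowers (cShift p) := by
      rw [hg, ← hk, hcc, ← map_zpow, ConjAct.ofConjAct_toConjAct]
      exact Subgroup.mem_zpowers_iff.mpr ⟨k, rfl⟩
    obtain ⟨n, hn⟩ := mem_powers_iff_mem_zpowers.mpr hgz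
    have hg1 : g ≠ 1 := by
      intro h
      apply hne
      have : (a : ConjAct G) = 1 := by
        have := congrArg ConjAct.toConjAct h
        simpa [hg] using this
      exact Subtype.ext (by simpa using this)
    have hndvd : ¬ p ∣ n := by
      intro hd
      exact hg1 (by rw [← hn]; exact (cShift_pow_eq_one_iff p n).mpr hd)
    have hcop : Nat.Coprime n p := (hp.coprime_iff_not_dvd.mpr hndvd).symm
    obtain ⟨m, -, hm⟩ := Nat.exists_mul_mod_eq_one_of_coprime hcop hp.one_lt
    have hc : cShift p = g ^ m := by
      rw [← hn, ← pow_mul]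
      have h2 : cShift p ^ (n * m) = cShift p ^ 1 := by
        rw [pow_eq_pow_iff_modEq, orderOf_cShift]
        show n * m % p = 1 % p
        rw [hm, Nat.mod_eq_of_lt hp.one_lt]
      simpa using h2.symm
    have hset : MulAction.fixedBy G a = {σ : G | Commute (cShift p) σ} := by
      ext σ
      rw [MulAction.mem_fixedBy, hsm]
      constructor
      · intro h
        have hcg : Commute g σ := mul_inv_eq_iff_eq_mul.mp h
        rw [Set.mem_setOf_eq, hc]
        exact hcg.pow_left m
      · intro h
        have hcg : Commute g σ := by rw [← hn]; exact h.pow_left n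
        exact mul_inv_eq_iff_eq_mul.mpr hcg
    rw [hset]
    calc Nat.card {σ : G // Commute (cShift p) σ} = Nat.card (ZMod p) :=
          Nat.card_congr (centralizerEquiv p)
      _ = p := Nat.card_zmod p
  -- fixed points of the identity
  have hfix1 : Nat.card (MulAction.fixedBy G (1 : H)) = p.factorial := by
    rw [MulAction.fixedBy_one_eq_univ]
    rw [Nat.card_congr (Equiv.Set.univ G), Nat.card_eq_fintype_card]
    show Fintype.card (Equiv.Perm (ZMod p)) = p.factorial
    rw [Fintype.card_perm, ZMod.card]
  -- Burnside
  have burn := MulAction.sum_card_fixedBy_eq_card_orbits_mul_card_group (G := H) G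
  have hsum : (∑ a : H, Fintype.card (MulAction.fixedBy G a)) =
      p.factorial + (p - 1) * p := by
    rw [← Finset.sum_erase_add Finset.univ _ (Finset.mem_univ (1 : H))]
    have hconst : ∀ a ∈ Finset.univ.erase (1 : H),
        Fintype.card (MulAction.fixedBy G a) = p := by
      intro a ha
      rw [← Nat.card_eq_fintype_card]
      exact hfixne a (Finset.ne_of_mem_erase ha)
    rw [Finset.sum_congr rfl hconst, Finset.sum_const, smul_eq_mul,
      Finset.card_erase_of_mem (Finset.mem_univ _), Finset.card_univ, hcardH,
      ← Nat.card_eq_fintype_card, hfix1]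
    ring
  rw [hsum, hcardH] at burn
  -- conclude
  have hcard : Nat.card (Quotient (shiftSetoid p)) * p = p.factorial + (p - 1) * p := by
    rw [hquot, Nat.card_eq_fintype_card]
    exact burn.symm
  have hfac : p.factorial = p * (p - 1).factorial := by
    conv_lhs => rw [show p = (p - 1) + 1 by omega]
    rw [Nat.factorial_succ]
    congr 1
    omega
  have hrhs : p.factorial + (p - 1) * p = ((p - 1).factorial + p - 1) * p := by
    have h1 : (p - 1).factorial + p - 1 = (p - 1).factorial + (p - 1) := by omega
    rw [h1, add_mul, hfac, mul_comm]
  rw [hrhs] at hcard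
  exact Nat.eq_of_mul_eq_mul_right hp.pos hcard
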